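/- Let L be a left Bol loop and let a, b ∈ C(L) be elements of the commutant. Then (a·a)·b ∈ C(L), i.e., ((a·a)·b)·x = x·((a·a)·b) for all x ∈ L. -/

import Mathlib

/-- A loop: a type with a binary operation and a two-sided neutral element,
in which the equations `a * x = b` and `y * a = b` have unique solutions. -/
class Loop' (L : Type*) extends Mul L, One L where
  one_mul : ∀ x : L, 1 * x = x
  mul_one : ∀ x : L, x * 1 = x
  existsUnique_mul_left : ∀ a b : L, ∃! x : L, a * x = b
  existsUnique_mul_right : ∀ a b : L, ∃! y : L, y * a = b

/-- The (left) Bol identity. -/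
def IsBolLoop (L : Type*) [Loop' L] : Prop :=
  ∀ x y z : L, x * (y * (x * z)) = (x * (y * x)) * z

/-- The commutant of a loop. -/
def commutant (L : Type*) [Loop' L] : Set L :=
  {a : L | ∀ x : L, a * x = x * a}

/-- Powers: `a ^ 0 = 1`, `a ^ (k+1) = a * a ^ k`. -/
def lpow {L : Type*} [Loop' L] (a : L) : ℕ → L
  | 0 => 1
  | k + 1 => a * lpow a k

section BolAux

variable {L : Type*} [Loop' L]

private lemma mul_left_bij (g : L) : Function.Bijective (fun x : L => g * x) := by
  constructor
  · intro x y h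
    obtain ⟨w, hw, hu⟩ := Loop'.existsUnique_mul_left g (g * y)
    exact (hu x h).trans (hu y rfl).symm
  · intro z
    obtain ⟨w, hw, -⟩ := Loop'.existsUnique_mul_left g z
    exact ⟨w, hw⟩

private lemma mul_right_cancel' (g : L) {x y : L} (h : x * g = y * g) : x = y := by
  obtain ⟨w, hw, hu⟩ := Loop'.existsUnique_mul_right g (y * g)
  exact (hu x h).trans (hu y rfl).symm

private noncomputable def π (g : L) : Equiv.Perm L := Equiv.ofBijective _ (mul_left_bij g)

private lemma commC {t : L} (ht : t ∈ commutant L) (x : L) : t * x = x * t := ht x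

private lemma bol_perm (hBol : IsBolLoop L) (x y : L) :
    π (x * (y * x)) = π x * π y * π x := by
  ext z
  show (x * (y * x)) * z = x * (y * (x * z))
  exact (hBol x y z).symm

private lemma π_one : π (1 : L) = 1 := by
  ext z
  show (1 : L) * z = z
  exact Loop'.one_mul z

private lemma π_sq (hBol : IsBolLoop L) (x : L) : π (x * x) = π x * π x := by
  have h := bol_perm hBol x 1
  rw [Loop'.one_mul, π_one, mul_one] at h
  exact h

private lemma sq_mul (hBol : IsBolLoop L) (t x : L) : (t * t) * x = t * (t * x) :=
  DFunLike.congr_fun (π_sq hBol t) x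

private lemma key6 (hBol : IsBolLoop L) {t : L} (ht : t ∈ commutant L) (x z : L) :
    (x * (z * t)) * t = ((t * t) * x) * z := by
  have h := hBol t x z
  rw [commC ht z] at h
  rw [← commC ht x] at h
  rw [← sq_mul hBol t x] at h
  rw [commC ht (x * (z * t))] at h
  exact h

private lemma sq_mem (hBol : IsBolLoop L) {t : L} (ht : t ∈ commutant L) :
    t * t ∈ commutant L := by
  intro x
  have h := key6 hBol ht x t
  exact (mul_right_cancel' t h).symm

private lemma needT (hBol : IsBolLoop L) {s t : L} (hs : s ∈ commutant L)
    (ht : t ∈ commutant L) (x : L) :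
    t * (x * (s * t)) = s * (t * (t * x)) := by
  have h := hBol t x s
  rw [commC ht s] at h
  rw [← commC ht x] at h
  rw [← sq_mul hBol t x] at h
  rw [← commC hs ((t * t) * x)] at h
  rw [sq_mul hBol t x] at h
  exact h

private lemma trel (hBol : IsBolLoop L) {s t : L} (hs : s ∈ commutant L)
    (ht : t ∈ commutant L) :
    π s * (π t)⁻¹ * π s * π t * π t = π t * π s * π s := by
  ext x
  show s * ((π t)⁻¹ (s * (t * (t * x)))) = t * (s * (s * x))
  have h1 := needT hBol hs ht x
  have hinv : (π t)⁻¹ (s * (t * (t * x))) = x * (s * t) := by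
    rw [← h1]
    exact Equiv.symm_apply_apply (π t) (x * (s * t))
  rw [hinv]
  have h2 := needT hBol ht hs x
  rw [commC ht s] at h2
  exact h2

end BolAux

/-- In a left Bol loop, if `a` and `b` are commutant elements then
`(a * a) * b` is a commutant element. -/
theorem sq_mul_mem_commutant (L : Type*) [Loop' L] (hBol : IsBolLoop L)
    (a b : L) (ha : a ∈ commutant L) (hb : b ∈ commutant L) :
    (a * a) * b ∈ commutant L := by
  -- left inverse of b
  obtain ⟨binv, hbinv, -⟩ := Loop'.existsUnique_mul_right (L := L) b 1
  have hπbinv : π binv = (π b)⁻¹ := by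
    have h := bol_perm hBol b binv
    rw [hbinv, Loop'.mul_one] at h
    have h1 : π b * (π binv * π b) = π b * 1 := by
      rw [mul_one, ← mul_assoc]; exact h.symm
    exact eq_inv_of_mul_eq_one_left (mul_left_cancel h1)
  -- binv is in the commutant
  have hbinvC : binv ∈ commutant L := by
    intro u
    have e := key6 hBol hb ((π b)⁻¹ ((π b)⁻¹ u)) binv
    rw [hbinv, Loop'.mul_one] at e
    set v := (π b)⁻¹ ((π b)⁻¹ u) with hv
    have h2 : (b * b) * v = u := by
      rw [sq_mul hBol b v]
      show π b (π b v) = u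
      rw [hv]
      simp
    rw [h2] at e
    have h3 : b * v = binv * u := by
      show π b v = π binv u
      rw [hπbinv, hv]
      exact Equiv.apply_symm_apply (π b) ((π b)⁻¹ u)
    exact (h3.symm.trans (commC hb v)).trans e
  -- the key permutation relation, for s = a, t = binv
  have t3 := trel hBol ha hbinvC
  rw [hπbinv, inv_inv] at t3
  -- t3 : π a * π b * π a * (π b)⁻¹ * (π b)⁻¹ = (π b)⁻¹ * π a * π a
  have t3' : π a * π b * π a = (π b)⁻¹ * π a * π a * π b * π b := by
    rw [← t3]
    group
  -- now prove the commutant property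
  intro x
  have hfac : (a * a) * b = a * (b * a) := by
    rw [sq_mul hBol a b, ← commC hb a]
  have hL : ((a * a) * b) * x = a * (b * (a * x)) := by
    rw [hfac]
    exact DFunLike.congr_fun (bol_perm hBol a b) x
  have hR : b * (x * ((a * a) * b)) = a * (a * (b * (b * x))) := by
    have h := needT hBol (sq_mem hBol ha) hb x
    rw [sq_mul hBol a (b * (b * x))] at h
    exact h
  have hR' : x * ((a * a) * b) = (π b)⁻¹ (a * (a * (b * (b * x)))) := by
    rw [← hR]
    exact (Equiv.symm_apply_apply (π b) (x * ((a * a) * b))).symm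
  have h6 : a * (b * (a * x)) = (π b)⁻¹ (a * (a * (b * (b * x)))) :=
    DFunLike.congr_fun t3' x
  rw [hL, hR']
  exact h6
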